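/- arXiv:1912.12579 — 2 statements merged into one kernel-verified Lean document; each statement's English description precedes it below -/
import Mathlib

section
/- For α ≠ 0 and a, b ∈ ℝ, the function ψ(r,z) = (a + bz)·r·J₁(|α|r) satisfies D²ψ = -α²ψ on {(r,z) : r > 0} and ψ(r,z) → 0 as r → 0⁺ for each fixed z. -/
noncomputable def D2 (ψ : ℝ → ℝ → ℝ) (r z : ℝ) : ℝ :=
  deriv (fun s => deriv (fun t => ψ t z) s) r
    - (1 / r) * deriv (fun t => ψ t z) r
    + deriv (fun s => deriv (fun t => ψ r t) s) z

theorem stmt8 (α a b : ℝ) (hα : α ≠ 0) (J1 : ℝ → ℝ)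
    (hJ : ContDiff ℝ 2 J1)
    (hJode : ∀ x : ℝ,
      x ^ 2 * deriv (deriv J1) x + x * deriv J1 x + (x ^ 2 - 1) * J1 x = 0)
    (hJlim : Filter.Tendsto J1 (nhdsWithin 0 (Set.Ioi 0)) (nhds 0)) :
    (∀ r z : ℝ, 0 < r →
      D2 (fun r z => (a + b * z) * (r * J1 (|α| * r))) r z
        = -α ^ 2 * ((a + b * z) * (r * J1 (|α| * r)))) ∧
    (∀ z : ℝ, Filter.Tendsto (fun r => (a + b * z) * (r * J1 (|α| * r)))
      (nhdsWithin 0 (Set.Ioi 0)) (nhds 0)) := by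
  have hJ1d : Differentiable ℝ J1 := hJ.differentiable (by norm_num)
  have hJ'c : ContDiff ℝ 1 (deriv J1) := by
    have h2 : ContDiff ℝ ((1 : ℕ) + 1) J1 := by exact_mod_cast hJ
    exact ((contDiff_succ_iff_deriv).mp h2).2.2
  have hJ'd : Differentiable ℝ (deriv J1) := hJ'c.differentiable one_ne_zero
  set c := |α| with hcdef
  have hcsq : c ^ 2 = α ^ 2 := sq_abs α
  -- derivative of t ↦ J1 (c*t)
  have hlin : ∀ t : ℝ, HasDerivAt (fun t : ℝ => c * t) c t := by
    intro t
    simpa using (hasDerivAt_id t).const_mul c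
  have hch : ∀ t : ℝ, HasDerivAt (fun t => J1 (c * t)) (c * deriv J1 (c * t)) t := by
    intro t
    have h := (hJ1d (c * t)).hasDerivAt.comp t (hlin t)
    simp only [Function.comp_def] at h
    rw [mul_comm]; exact h
  have hch' : ∀ t : ℝ, HasDerivAt (fun t => deriv J1 (c * t))
      (c * deriv (deriv J1) (c * t)) t := by
    intro t
    have h := (hJ'd (c * t)).hasDerivAt.comp t (hlin t)
    simp only [Function.comp_def] at h
    rw [mul_comm]; exact h
  have hf1 : ∀ t : ℝ, HasDerivAt (fun t => t * J1 (c * t))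
      (J1 (c * t) + t * (c * deriv J1 (c * t))) t := by
    intro t
    simpa [Pi.mul_def] using (hasDerivAt_id t).mul (hch t)
  constructor
  · intro r z hr
    have hrne : r ≠ 0 := ne_of_gt hr
    -- first r-derivative
    have hd1 : ∀ t : ℝ, deriv (fun t => (a + b * z) * (t * J1 (c * t))) t
        = (a + b * z) * (J1 (c * t) + t * (c * deriv J1 (c * t))) := by
      intro t
      exact ((hf1 t).const_mul (a + b * z)).deriv
    -- second r-derivative
    have hf2 : HasDerivAt (fun s => (a + b * z) * (J1 (c * s) + s * (c * deriv J1 (c * s))))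
        ((a + b * z) * (c * deriv J1 (c * r)
          + (c * deriv J1 (c * r) + r * (c * (c * deriv (deriv J1) (c * r)))))) r := by
      have h2 : HasDerivAt (fun s => s * (c * deriv J1 (c * s)))
          (c * deriv J1 (c * r) + r * (c * (c * deriv (deriv J1) (c * r)))) r := by
        simpa [Pi.mul_def] using (hasDerivAt_id r).mul ((hch' r).const_mul c)
      exact ((hch r).add h2).const_mul (a + b * z)
    have hd2 : deriv (fun s => deriv (fun t => (a + b * z) * (t * J1 (c * t))) s) r
        = (a + b * z) * (c * deriv J1 (c * r)
          + (c * deriv J1 (c * r) + r * (c * (c * deriv (deriv J1) (c * r))))) := by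
      have : (fun s => deriv (fun t => (a + b * z) * (t * J1 (c * t))) s)
          = fun s => (a + b * z) * (J1 (c * s) + s * (c * deriv J1 (c * s))) := by
        funext s; exact hd1 s
      rw [this]
      exact hf2.deriv
    -- z derivatives
    have hz1 : ∀ t : ℝ, deriv (fun t => (a + b * t) * (r * J1 (c * r))) t
        = b * (r * J1 (c * r)) := by
      intro t
      have : HasDerivAt (fun t => (a + b * t) * (r * J1 (c * r)))
          (b * (r * J1 (c * r))) t := by
        simpa using (((hasDerivAt_id t).const_mul b).const_add a).mul_const (r * J1 (c * r))
      exact this.deriv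
    have hz2 : deriv (fun s => deriv (fun t => (a + b * t) * (r * J1 (c * r))) s) z = 0 := by
      have : (fun s => deriv (fun t => (a + b * t) * (r * J1 (c * r))) s)
          = fun _ => b * (r * J1 (c * r)) := by
        funext s; exact hz1 s
      rw [this]; exact deriv_const z _
    show deriv (fun s => deriv (fun t => (a + b * z) * (t * J1 (c * t))) s) r
        - (1 / r) * deriv (fun t => (a + b * z) * (t * J1 (c * t))) r
        + deriv (fun s => deriv (fun t => (a + b * t) * (r * J1 (c * r))) s) z
        = -α ^ 2 * ((a + b * z) * (r * J1 (c * r)))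
    rw [hd2, hd1 r, hz2, ← hcsq]
    have hode := hJode (c * r)
    field_simp
    linear_combination (a + b * z) * hode
  · intro z
    have hcont : Continuous (fun r : ℝ => (a + b * z) * (r * J1 (c * r))) := by
      fun_prop
    have := hcont.tendsto 0
    simp only [mul_zero, zero_mul] at this
    exact this.mono_left nhdsWithin_le_nhds
end

section
/- For constants c > α² ≥ 0 and a, b ∈ ℝ, the function ψ(r,z) = r·J₁(r√c)·(a·exp(z√(c-α²)) + b·exp(-z√(c-α²))) satisfies D²ψ = -α²ψ on {(r,z) : r > 0}. -/
theorem stmt9 (α c a b : ℝ) (hc : α ^ 2 < c) (J1 : ℝ → ℝ)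
    (hJ : ContDiff ℝ 2 J1)
    (hJode : ∀ x : ℝ,
      x ^ 2 * deriv (deriv J1) x + x * deriv J1 x + (x ^ 2 - 1) * J1 x = 0) :
    ∀ r z : ℝ, 0 < r →
      D2 (fun r z => r * J1 (r * Real.sqrt c) *
          (a * Real.exp (z * Real.sqrt (c - α ^ 2))
            + b * Real.exp (-z * Real.sqrt (c - α ^ 2)))) r z
        = -α ^ 2 * (r * J1 (r * Real.sqrt c) *
            (a * Real.exp (z * Real.sqrt (c - α ^ 2))
              + b * Real.exp (-z * Real.sqrt (c - α ^ 2)))) := by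
  intro r z hr
  have hc0 : (0:ℝ) ≤ c := le_trans (sq_nonneg α) hc.le
  set s := Real.sqrt c with hs
  set k := Real.sqrt (c - α ^ 2) with hk
  have hs2 : s ^ 2 = c := Real.sq_sqrt hc0
  have hk2 : k ^ 2 = c - α ^ 2 := Real.sq_sqrt (by linarith)
  have hJ' : Differentiable ℝ J1 ∧ ContDiff ℝ 1 (deriv J1) := by
    have hJ2 : ContDiff ℝ (1 + 1) J1 := by exact_mod_cast hJ
    obtain ⟨h1, _, h3⟩ := contDiff_succ_iff_deriv.mp hJ2
    exact ⟨h1, h3⟩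
  have hJd : Differentiable ℝ J1 := hJ'.1
  have hJd' : Differentiable ℝ (deriv J1) := hJ'.2.differentiable one_ne_zero
  set E : ℝ := a * Real.exp (z * k) + b * Real.exp (-z * k) with hE
  -- first r-derivative
  have hd1 : ∀ t : ℝ, HasDerivAt (fun t => t * J1 (t * s) * E)
      ((J1 (t * s) + t * (deriv J1 (t * s) * s)) * E) t := by
    intro t
    have hchain : HasDerivAt (fun t => J1 (t * s)) (deriv J1 (t * s) * s) t := by
      have := ((hJd (t * s)).hasDerivAt).comp t ((hasDerivAt_id t).mul_const s)
      simpa [Function.comp_def] using this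
    have := ((hasDerivAt_id t).mul hchain).mul_const E
    simpa [mul_comm, mul_assoc] using this
  have hderiv1 : (deriv (fun t => t * J1 (t * s) * E))
      = fun t => (J1 (t * s) + t * (deriv J1 (t * s) * s)) * E :=
    funext fun t => (hd1 t).deriv
  -- second r-derivative
  have hd2 : HasDerivAt (fun t => (J1 (t * s) + t * (deriv J1 (t * s) * s)) * E)
      ((deriv J1 (r * s) * s + (deriv J1 (r * s) * s + r * (deriv (deriv J1) (r * s) * s * s))) * E) r := by
    have hchain : HasDerivAt (fun t => J1 (t * s)) (deriv J1 (r * s) * s) r := by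
      have := ((hJd (r * s)).hasDerivAt).comp r ((hasDerivAt_id r).mul_const s)
      simpa [Function.comp_def] using this
    have hchain' : HasDerivAt (fun t => deriv J1 (t * s)) (deriv (deriv J1) (r * s) * s) r := by
      have := ((hJd' (r * s)).hasDerivAt).comp r ((hasDerivAt_id r).mul_const s)
      simpa [Function.comp_def] using this
    have h2 := (hasDerivAt_id r).mul (hchain'.mul_const s)
    have := (hchain.add h2).mul_const E
    refine this.congr_deriv ?_
    simp only [id_eq]
    ring
  -- z-derivatives
  have hz1 : ∀ t : ℝ, HasDerivAt (fun t => r * J1 (r * s) * (a * Real.exp (t * k) + b * Real.exp (-t * k)))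
      (r * J1 (r * s) * (a * (Real.exp (t * k) * k) + b * (Real.exp (-t * k) * (-k)))) t := by
    intro t
    have e1 : HasDerivAt (fun t : ℝ => Real.exp (t * k)) (Real.exp (t * k) * k) t := by
      have := (Real.hasDerivAt_exp (t * k)).comp t ((hasDerivAt_id t).mul_const k)
      simpa [Function.comp_def] using this
    have e2 : HasDerivAt (fun t : ℝ => Real.exp (-t * k)) (Real.exp (-t * k) * (-k)) t := by
      have h := ((hasDerivAt_id t).neg.mul_const k)
      have := (Real.hasDerivAt_exp (-t * k)).comp t h
      simpa [mul_comm, Function.comp_def] using this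
    have := ((e1.const_mul a).add (e2.const_mul b)).const_mul (r * J1 (r * s))
    simpa [mul_assoc] using this
  have hzderiv1 : (deriv (fun t => r * J1 (r * s) * (a * Real.exp (t * k) + b * Real.exp (-t * k))))
      = fun t => r * J1 (r * s) * (a * (Real.exp (t * k) * k) + b * (Real.exp (-t * k) * (-k))) :=
    funext fun t => (hz1 t).deriv
  have hz2 : HasDerivAt (fun t => r * J1 (r * s) * (a * (Real.exp (t * k) * k) + b * (Real.exp (-t * k) * (-k))))
      (r * J1 (r * s) * (a * (Real.exp (z * k) * k * k) + b * (Real.exp (-z * k) * (-k) * (-k)))) z := by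
    have e1 : HasDerivAt (fun t : ℝ => Real.exp (t * k) * k) (Real.exp (z * k) * k * k) z := by
      have := (Real.hasDerivAt_exp (z * k)).comp z ((hasDerivAt_id z).mul_const k)
      have := this.mul_const k
      simpa [mul_assoc, mul_comm] using this
    have e2 : HasDerivAt (fun t : ℝ => Real.exp (-t * k) * (-k)) (Real.exp (-z * k) * (-k) * (-k)) z := by
      have h := ((hasDerivAt_id z).neg.mul_const k)
      have := ((Real.hasDerivAt_exp (-z * k)).comp z h).mul_const (-k)
      refine this.congr_deriv ?_
      ring
    have := ((e1.const_mul a).add (e2.const_mul b)).const_mul (r * J1 (r * s))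
    simpa [mul_assoc] using this
  have hode := hJode (r * s)
  simp only [D2]
  rw [show (fun t => (fun r z => r * J1 (r * s) * (a * Real.exp (z * k) + b * Real.exp (-z * k))) t z)
      = fun t => t * J1 (t * s) * E from rfl]
  rw [hderiv1, hd2.deriv]
  beta_reduce
  rw [show (fun t => (fun r z => r * J1 (r * s) * (a * Real.exp (z * k) + b * Real.exp (-z * k))) r t)
      = fun t => r * J1 (r * s) * (a * Real.exp (t * k) + b * Real.exp (-t * k)) from rfl]
  rw [hzderiv1, hz2.deriv]
  have hr' : r ≠ 0 := ne_of_gt hr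
  simp only [hE, neg_mul]
  field_simp
  linear_combination (a * Real.exp (z * k) + b * Real.exp (-(z * k))) * hJode (r * s)
    + (r ^ 2 * J1 (r * s) * (a * Real.exp (z * k) + b * Real.exp (-(z * k)))) * hk2
    - (r ^ 2 * J1 (r * s) * (a * Real.exp (z * k) + b * Real.exp (-(z * k)))) * hs2
end
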